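/- Let g = [[a,b],[c,d]] ∈ SL(2m,ℝ) (written in m×m blocks) and let Υ be the 2m×2m matrix [[0, I_m],[I_m, 0]]. Then the following are equivalent: (i) for every x ∈ M_m(ℝ) such that both cx+d and −cxᵀ+d are invertible, one has (a(−xᵀ)+b)(c(−xᵀ)+d)⁻¹ = −((ax+b)(cx+d)⁻¹)ᵀ; (ii) there exists λ ∈ {−1, 1} such that gᵀ Υ g = λ Υ, i.e. aᵀc + cᵀa = 0, bᵀd + dᵀb = 0 and aᵀd + cᵀb = λ I_m. -/

import Mathlib

open Matrix Polynomial

namespace ConformalAux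

variable {m : ℕ}

private abbrev Mat (m : ℕ) := Matrix (Fin m) (Fin m) ℝ

private lemma exists_isUnit_det (c d : Mat m)
    (hsurj : ∀ w : Fin m → ℝ, ∃ u v : Fin m → ℝ, c *ᵥ u + d *ᵥ v = w) :
    ∃ x : Mat m, IsUnit (c * x + d).det := by
  classical
  set C := Matrix.toLin' c with hC
  set D := Matrix.toLin' d with hD
  have hrange : LinearMap.range C ⊔ LinearMap.range D = ⊤ := by
    rw [← LinearMap.range_coprod, LinearMap.range_eq_top]
    intro w
    obtain ⟨u, v, huv⟩ := hsurj w
    exact ⟨(u, v), by simpa [C, D, Matrix.toLin'_apply] using huv⟩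
  set rC := LinearMap.range C with hrC
  set rD := LinearMap.range D with hrD
  obtain ⟨W', hW'⟩ := Submodule.exists_isCompl (rD.comap rC.subtype)
  set W := W'.map rC.subtype with hWdef
  have hWle : W ≤ rC := Submodule.map_subtype_le _ _
  have hrc2 : (rC ⊓ rD) ⊔ W = rC := by
    rw [hWdef, ← Submodule.map_comap_subtype, ← Submodule.map_sup, hW'.sup_eq_top,
      Submodule.map_top, Submodule.range_subtype]
  have hWDbot : W ⊓ rD = ⊥ := by
    rw [eq_bot_iff]
    rintro z hz
    obtain ⟨hzW, hzD⟩ := Submodule.mem_inf.1 hz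
    rw [hWdef, Submodule.mem_map] at hzW
    obtain ⟨z', hz'W, rfl⟩ := hzW
    have hmem : z' ∈ (rD.comap rC.subtype) ⊓ W' := ⟨hzD, hz'W⟩
    rw [hW'.inf_eq_bot] at hmem
    have hz0 : z' = 0 := by simpa using hmem
    simp [hz0]
  have hWDtop : W ⊔ rD = ⊤ := by
    rw [eq_top_iff, ← hrange]
    apply sup_le
    · rw [← hrc2]
      exact sup_le (le_trans inf_le_right le_sup_right) le_sup_left
    · exact le_sup_right
  have hcompl : IsCompl W rD := ⟨disjoint_iff.2 hWDbot, codisjoint_iff.2 hWDtop⟩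
  have hfr1 := Submodule.finrank_add_eq_of_isCompl hcompl
  have hfr2 := LinearMap.finrank_range_add_finrank_ker D
  rw [← hrD] at hfr2
  have hfr : Module.finrank ℝ (LinearMap.ker D) = Module.finrank ℝ W := by omega
  set e := LinearEquiv.ofFinrankEq (R := ℝ) (LinearMap.ker D) W hfr with he
  obtain ⟨ρ, hρ⟩ := C.rangeRestrict.exists_rightInverse_of_surjective
    (LinearMap.range_rangeRestrict C)
  have hρ' : ∀ z : rC, C (ρ z) = (z : Fin m → ℝ) := by
    intro z
    have h1 := congrArg (fun f => ((f z : rC) : Fin m → ℝ)) hρ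
    simpa using h1
  obtain ⟨K', hK⟩ := Submodule.exists_isCompl (LinearMap.ker D)
  set π := Submodule.projectionOnto _ _ hK with hπ
  set Xl : (Fin m → ℝ) →ₗ[ℝ] (Fin m → ℝ) :=
    ρ ∘ₗ (Submodule.inclusion hWle) ∘ₗ (e : LinearMap.ker D →ₗ[ℝ] W) ∘ₗ π with hXl
  refine ⟨LinearMap.toMatrix' Xl, ?_⟩
  rw [isUnit_iff_ne_zero]
  intro hdet
  obtain ⟨v, hv0, hv⟩ := Matrix.exists_mulVec_eq_zero_iff.2 hdet
  obtain ⟨k, k', hkk', -⟩ := Submodule.existsUnique_add_of_isCompl hK v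
  have hπv : π v = k := by
    rw [← hkk', map_add, hπ]
    simp
  have hXv : Xl v = ρ (Submodule.inclusion hWle (e k)) := by
    simp [hXl, hπv]
  have hCXv : C (Xl v) = ((e k : W) : Fin m → ℝ) := by
    rw [hXv, hρ']
    rfl
  have hDv : D v = D (k' : Fin m → ℝ) := by
    rw [← hkk', map_add]
    have h0 : D (k : Fin m → ℝ) = 0 := k.2
    rw [h0, zero_add]
  have hsum : ((e k : W) : Fin m → ℝ) + D (k' : Fin m → ℝ) = 0 := by
    have hmv : (c * LinearMap.toMatrix' Xl + d) *ᵥ v = 0 := hv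
    rw [Matrix.add_mulVec, ← Matrix.mulVec_mulVec] at hmv
    have h1 : c *ᵥ (LinearMap.toMatrix' Xl *ᵥ v) = C (Xl v) := by
      rw [hC, ← Matrix.toLin'_apply c, ← Matrix.toLin'_apply (LinearMap.toMatrix' Xl),
        Matrix.toLin'_toMatrix']
    have h2 : d *ᵥ v = D v := by rw [hD, Matrix.toLin'_apply]
    rw [h1, h2, hCXv, hDv] at hmv
    exact hmv
  have hmemD : D (k' : Fin m → ℝ) ∈ rD := LinearMap.mem_range_self D _
  have hek0 : ((e k : W) : Fin m → ℝ) = 0 := by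
    have hmem : ((e k : W) : Fin m → ℝ) ∈ W ⊓ rD := by
      refine ⟨(e k).2, ?_⟩
      have hneg : ((e k : W) : Fin m → ℝ) = -(D (k' : Fin m → ℝ)) := by
        linear_combination (norm := module) hsum
      rw [hneg]
      exact neg_mem hmemD
    rw [hWDbot] at hmem
    simpa using hmem
  have hk0 : k = 0 := by
    have h0 : (e k : W) = 0 := Subtype.ext hek0
    exact e.map_eq_zero_iff.1 h0
  have hDk' : D (k' : Fin m → ℝ) = 0 := by
    rw [hek0, zero_add] at hsum; exact hsum
  have hk'0 : (k' : Fin m → ℝ) = 0 := by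
    have h1 : (k' : Fin m → ℝ) ∈ LinearMap.ker D ⊓ K' := ⟨hDk', k'.2⟩
    rw [hK.inf_eq_bot] at h1
    simpa using h1
  apply hv0
  rw [← hkk', hk'0, hk0]
  simp

private lemma surj_of_isUnit (a b c d : Mat m)
    (hg : IsUnit (Matrix.fromBlocks a b c d).det) :
    ∀ w : Fin m → ℝ, ∃ u v : Fin m → ℝ, c *ᵥ u + d *ᵥ v = w := by
  intro w
  set g := Matrix.fromBlocks a b c d with hgdef
  set y := g⁻¹ *ᵥ Sum.elim (0 : Fin m → ℝ) w with hy
  refine ⟨y ∘ Sum.inl, y ∘ Sum.inr, ?_⟩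
  have h1 : g *ᵥ y = Sum.elim (0 : Fin m → ℝ) w := by
    rw [hy, Matrix.mulVec_mulVec, Matrix.mul_nonsing_inv _ hg]
    exact Matrix.one_mulVec _
  rw [hgdef, Matrix.fromBlocks_mulVec] at h1
  funext i
  have h2 := congrFun h1 (Sum.inr i)
  simpa using h2

private lemma expand_id (a b c d x : Mat m) :
    (c * x + d)ᵀ * (a * (-xᵀ) + b) + (a * x + b)ᵀ * (c * (-xᵀ) + d)
      = -(xᵀ * (cᵀ * a + aᵀ * c) * xᵀ) + xᵀ * (cᵀ * b + aᵀ * d)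
        - (dᵀ * a + bᵀ * c) * xᵀ + (dᵀ * b + bᵀ * d) := by
  simp only [Matrix.transpose_add, Matrix.transpose_mul]
  noncomm_ring

private lemma quad_id (E F G H w v : Mat m) (t : ℝ) :
    -((w + t • v)ᵀ * E * (w + t • v)ᵀ) + (w + t • v)ᵀ * F - G * (w + t • v)ᵀ + H
      = (-(wᵀ * E * wᵀ) + wᵀ * F - G * wᵀ + H)
        + t • (-(wᵀ * E * vᵀ) - vᵀ * E * wᵀ + vᵀ * F - G * vᵀ)
        + (t * t) • (-(vᵀ * E * vᵀ)) := by
  simp only [Matrix.transpose_add, Matrix.transpose_smul, Matrix.mul_add, Matrix.add_mul,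
    Matrix.smul_mul, Matrix.mul_smul, smul_smul, smul_add, smul_sub, smul_neg]
  module

private lemma finite_det_zero (M N : Mat m) (h : ∃ t₀ : ℝ, (M + t₀ • N).det ≠ 0) :
    {t : ℝ | (M + t • N).det = 0}.Finite := by
  classical
  set Q : Matrix (Fin m) (Fin m) ℝ[X] :=
    Matrix.of (fun i j => Polynomial.C (M i j) + Polynomial.C (N i j) * Polynomial.X) with hQ
  have hev : ∀ t : ℝ, (M + t • N).det = Q.det.eval t := by
    intro t
    have hmap : (Polynomial.evalRingHom t).mapMatrix Q = M + t • N := by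
      rw [RingHom.mapMatrix_apply]
      ext i j
      rw [Matrix.map_apply, Matrix.add_apply, Matrix.smul_apply]
      simp only [hQ, Matrix.of_apply, coe_evalRingHom, Polynomial.eval_add, Polynomial.eval_mul,
        Polynomial.eval_C, Polynomial.eval_X, smul_eq_mul]
      ring
    calc (M + t • N).det = ((Polynomial.evalRingHom t).mapMatrix Q).det := by rw [hmap]
      _ = (Polynomial.evalRingHom t) Q.det := (RingHom.map_det _ _).symm
      _ = Q.det.eval t := rfl
  obtain ⟨t₀, ht₀⟩ := h
  have hq : Q.det ≠ 0 := fun h0 => ht₀ (by rw [hev t₀, h0, Polynomial.eval_zero])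
  refine (Polynomial.finite_setOf_isRoot hq).subset (fun t ht => ?_)
  simp only [Set.mem_setOf_eq] at ht ⊢
  rwa [Polynomial.IsRoot, ← hev]

private lemma quad_vanish {p0 p1 p2 : ℝ} (T : Set ℝ) (hT : T.Infinite)
    (h : ∀ t ∈ T, p0 + t * p1 + t * t * p2 = 0) : p0 + p1 + p2 = 0 := by
  set q : ℝ[X] := Polynomial.C p0 + Polynomial.C p1 * Polynomial.X
    + Polynomial.C p2 * Polynomial.X ^ 2 with hq
  have hroot : ∀ t ∈ T, q.IsRoot t := by
    intro t ht
    have h2 := h t ht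
    simp only [hq, Polynomial.IsRoot, Polynomial.eval_add, Polynomial.eval_mul,
      Polynomial.eval_C, Polynomial.eval_X, Polynomial.eval_pow]
    nlinarith [h2]
  have hq0 : q = 0 := Polynomial.eq_zero_of_infinite_isRoot q (hT.mono hroot)
  have h3 := congrArg (Polynomial.eval 1) hq0
  simp only [hq, Polynomial.eval_add, Polynomial.eval_mul, Polynomial.eval_C,
    Polynomial.eval_X, Polynomial.eval_pow, Polynomial.eval_zero, one_pow, mul_one] at h3
  linarith

private lemma key_eq (a b c d u : Mat m)
    (hA : IsUnit (c * u + d).det) (hB : IsUnit (c * (-uᵀ) + d).det)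
    (h : (a * (-uᵀ) + b) * (c * (-uᵀ) + d)⁻¹ = -((a * u + b) * (c * u + d)⁻¹)ᵀ) :
    (c * u + d)ᵀ * (a * (-uᵀ) + b) + (a * u + b)ᵀ * (c * (-uᵀ) + d) = 0 := by
  set A := c * u + d
  set B := c * (-uᵀ) + d
  set P := a * (-uᵀ) + b
  set Q := a * u + b
  have hAT : IsUnit Aᵀ.det := by rwa [Matrix.det_transpose]
  have h2 : P = -(Q * A⁻¹)ᵀ * B := by
    rw [← h, Matrix.nonsing_inv_mul_cancel_right _ _ hB]
  have h3 : Aᵀ * P = -(Qᵀ * B) := by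
    rw [h2, Matrix.transpose_mul, Matrix.transpose_nonsing_inv, Matrix.neg_mul,
      Matrix.mul_neg, Matrix.mul_assoc, Matrix.mul_nonsing_inv_cancel_left _ _ hAT]
  rw [h3, neg_add_cancel]

private lemma rev_eq (a b c d u : Mat m)
    (hA : IsUnit (c * u + d).det) (hB : IsUnit (c * (-uᵀ) + d).det)
    (h : (c * u + d)ᵀ * (a * (-uᵀ) + b) + (a * u + b)ᵀ * (c * (-uᵀ) + d) = 0) :
    (a * (-uᵀ) + b) * (c * (-uᵀ) + d)⁻¹ = -((a * u + b) * (c * u + d)⁻¹)ᵀ := by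
  set A := c * u + d
  set B := c * (-uᵀ) + d
  set P := a * (-uᵀ) + b
  set Q := a * u + b
  have hAT : IsUnit Aᵀ.det := by rwa [Matrix.det_transpose]
  have h3 : Aᵀ * P = -(Qᵀ * B) := eq_neg_of_add_eq_zero_left h
  have h4 : P = Aᵀ⁻¹ * -(Qᵀ * B) := by
    rw [← h3, Matrix.nonsing_inv_mul_cancel_left _ _ hAT]
  rw [h4, Matrix.mul_neg, Matrix.neg_mul, ← Matrix.mul_assoc Aᵀ⁻¹ Qᵀ B,
    Matrix.mul_nonsing_inv_cancel_right _ _ hB, Matrix.transpose_mul,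
    Matrix.transpose_nonsing_inv]

private lemma p_vanish (a b c d : Mat m)
    (hg : IsUnit (Matrix.fromBlocks a b c d).det)
    (hyp : ∀ x : Mat m,
        IsUnit (c * x + d).det → IsUnit (c * (-xᵀ) + d).det →
        (a * (-xᵀ) + b) * (c * (-xᵀ) + d)⁻¹ = -((a * x + b) * (c * x + d)⁻¹)ᵀ)
    (x : Mat m) :
    -(xᵀ * (cᵀ * a + aᵀ * c) * xᵀ) + xᵀ * (cᵀ * b + aᵀ * d)
      - (dᵀ * a + bᵀ * c) * xᵀ + (dᵀ * b + bᵀ * d) = 0 := by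
  classical
  obtain ⟨x₀, hx₀⟩ := exists_isUnit_det c d (surj_of_isUnit a b c d hg)
  have hline : ∀ (z w : Mat m) (t : ℝ), c * (z + t • w) + d = (c * z + d) + t • (c * w) := by
    intro z w t
    rw [Matrix.mul_add, Matrix.mul_smul]
    abel
  have hlineT : ∀ (z w : Mat m) (t : ℝ),
      c * (-(z + t • w)ᵀ) + d = (c * (-zᵀ) + d) + t • (c * (-wᵀ)) := by
    intro z w t
    have h0 : -(z + t • w)ᵀ = -zᵀ + t • (-wᵀ) := by
      rw [Matrix.transpose_add, Matrix.transpose_smul]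
      module
    rw [h0, hline]
  -- find a base point where both determinants are nonzero
  set v₀ : Mat m := -x₀ᵀ - x₀ with hv₀
  have hS₁ : {t : ℝ | ((c * x₀ + d) + t • (c * v₀)).det = 0}.Finite := by
    refine finite_det_zero _ _ ⟨0, ?_⟩
    simpa using isUnit_iff_ne_zero.1 hx₀
  have hS₂ : {t : ℝ | ((c * (-x₀ᵀ) + d) + t • (c * (-v₀ᵀ))).det = 0}.Finite := by
    refine finite_det_zero _ _ ⟨1, ?_⟩
    have h0 : (c * (-x₀ᵀ) + d) + (1:ℝ) • (c * (-v₀ᵀ)) = c * x₀ + d := by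
      rw [← hlineT x₀ v₀ 1, hv₀]
      have : -(x₀ + (1:ℝ) • (-x₀ᵀ - x₀))ᵀ = x₀ := by
        rw [one_smul]
        simp only [Matrix.transpose_sub, Matrix.transpose_neg, Matrix.transpose_add,
          Matrix.transpose_transpose]
        abel
      rw [this]
    rw [h0]
    exact isUnit_iff_ne_zero.1 hx₀
  obtain ⟨s, hs⟩ := ((hS₁.union hS₂).infinite_compl).nonempty
  simp only [Set.mem_compl_iff, Set.mem_union, Set.mem_setOf_eq, not_or] at hs
  set y := x₀ + s • v₀ with hy
  have hyA : IsUnit (c * y + d).det := by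
    rw [hy, hline]
    exact isUnit_iff_ne_zero.2 hs.1
  have hyB : IsUnit (c * (-yᵀ) + d).det := by
    rw [hy, hlineT]
    exact isUnit_iff_ne_zero.2 hs.2
  -- the line from y to x
  set v : Mat m := x - y with hv
  have hT₁ : {t : ℝ | ((c * y + d) + t • (c * v)).det = 0}.Finite := by
    refine finite_det_zero _ _ ⟨0, ?_⟩
    simpa using isUnit_iff_ne_zero.1 hyA
  have hT₂ : {t : ℝ | ((c * (-yᵀ) + d) + t • (c * (-vᵀ))).det = 0}.Finite := by
    refine finite_det_zero _ _ ⟨0, ?_⟩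
    simpa using isUnit_iff_ne_zero.1 hyB
  set T := ({t : ℝ | ((c * y + d) + t • (c * v)).det = 0}
    ∪ {t : ℝ | ((c * (-yᵀ) + d) + t • (c * (-vᵀ))).det = 0})ᶜ with hT
  have hTinf : T.Infinite := (hT₁.union hT₂).infinite_compl
  set E := cᵀ * a + aᵀ * c with hE
  set F := cᵀ * b + aᵀ * d with hF
  set G := dᵀ * a + bᵀ * c with hG
  set H := dᵀ * b + bᵀ * d with hH
  have hvan : ∀ t ∈ T, -((y + t • v)ᵀ * E * (y + t • v)ᵀ) + (y + t • v)ᵀ * F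
      - G * (y + t • v)ᵀ + H = 0 := by
    intro t ht
    rw [hT, Set.mem_compl_iff, Set.mem_union, Set.mem_setOf_eq, Set.mem_setOf_eq, not_or] at ht
    have hA : IsUnit (c * (y + t • v) + d).det := by
      rw [hline]; exact isUnit_iff_ne_zero.2 ht.1
    have hB : IsUnit (c * (-(y + t • v)ᵀ) + d).det := by
      rw [hlineT]; exact isUnit_iff_ne_zero.2 ht.2
    have hk := key_eq a b c d (y + t • v) hA hB (hyp _ hA hB)
    rw [expand_id] at hk
    exact hk
  -- turn into per-entry quadratics
  have h1v : x = y + (1:ℝ) • v := by rw [hv, one_smul]; abel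
  rw [show xᵀ = (y + (1:ℝ) • v)ᵀ by rw [← h1v]]
  rw [quad_id E F G H y v 1]
  ext i j
  simp only [Matrix.add_apply, Matrix.smul_apply, smul_eq_mul, one_mul, mul_one,
    Matrix.zero_apply]
  have hq := quad_vanish (p0 := (-(yᵀ * E * yᵀ) + yᵀ * F - G * yᵀ + H) i j)
    (p1 := (-(yᵀ * E * vᵀ) - vᵀ * E * yᵀ + vᵀ * F - G * vᵀ) i j)
    (p2 := (-(vᵀ * E * vᵀ)) i j) T hTinf ?_
  · simp only [Matrix.add_apply, Matrix.sub_apply, Matrix.neg_apply] at hq ⊢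
    linarith
  · intro t ht
    have h5 := hvan t ht
    rw [quad_id E F G H y v t] at h5
    have h6 := congrArg (fun M : Mat m => M i j) h5
    simpa [Matrix.add_apply, Matrix.smul_apply, smul_eq_mul] using h6

end ConformalAux

open ConformalAux in
/-- For `g = [[a,b],[c,d]] ∈ SL(2m,ℝ)`, the conformal transformation
`x ↦ (ax+b)(cx+d)⁻¹` commutes with `x ↦ −xᵀ` if and only if `gᵀ Υ g = λ Υ` for some
`λ ∈ {−1,1}`, where `Υ = [[0,I],[I,0]]`; i.e. `aᵀc + cᵀa = 0`, `bᵀd + dᵀb = 0` and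
`aᵀd + cᵀb = λ I`. -/
theorem conformal_commutes_neg_transpose_iff {m : ℕ}
    (a b c d : Matrix (Fin m) (Fin m) ℝ)
    (hg : (Matrix.fromBlocks a b c d).det = 1) :
    (∀ x : Matrix (Fin m) (Fin m) ℝ,
        IsUnit (c * x + d).det → IsUnit (c * (-xᵀ) + d).det →
        (a * (-xᵀ) + b) * (c * (-xᵀ) + d)⁻¹ = -((a * x + b) * (c * x + d)⁻¹)ᵀ)
    ↔ (∃ l : ℝ, (l = -1 ∨ l = 1) ∧
        aᵀ * c + cᵀ * a = 0 ∧ bᵀ * d + dᵀ * b = 0 ∧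
        aᵀ * d + cᵀ * b = l • (1 : Matrix (Fin m) (Fin m) ℝ)) := by
  constructor
  · intro hyp
    rcases Nat.eq_zero_or_pos m with hm | hm
    · subst hm
      exact ⟨1, Or.inr rfl, by ext i j; exact i.elim0, by ext i j; exact i.elim0,
        by ext i j; exact i.elim0⟩
    · have hgu : IsUnit (Matrix.fromBlocks a b c d).det := by rw [hg]; exact isUnit_one
      have hp := p_vanish a b c d hgu hyp
      have hH : dᵀ * b + bᵀ * d = 0 := by
        have h0 := hp 0
        simpa using h0
      have h1 := hp 1
      have h2 := hp (-1)
      rw [Matrix.transpose_one] at h1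
      simp only [Matrix.transpose_neg, Matrix.transpose_one, Matrix.neg_mul, Matrix.mul_neg,
        Matrix.mul_one, Matrix.one_mul, neg_neg] at h1 h2
      rw [hH, add_zero] at h1 h2
      have hE : cᵀ * a + aᵀ * c = 0 := by
        linear_combination (norm := module) (-(1:ℝ)/2) • h1 + (-(1:ℝ)/2) • h2
      have hFG : cᵀ * b + aᵀ * d = dᵀ * a + bᵀ * c := by
        linear_combination (norm := module) ((1:ℝ)/2) • h1 + (-(1:ℝ)/2) • h2
      have hcomm : ∀ y : Matrix (Fin m) (Fin m) ℝ,
          y * (cᵀ * b + aᵀ * d) = (cᵀ * b + aᵀ * d) * y := by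
        intro y
        have h5 := hp yᵀ
        rw [Matrix.transpose_transpose, hE, ← hFG] at h5
        simp only [Matrix.mul_zero, Matrix.zero_mul, neg_zero, zero_add] at h5
        rw [hH, add_zero] at h5
        linear_combination (norm := module) h5
      obtain ⟨l, hl⟩ := Matrix.mem_range_scalar_of_commute_single
        (M := cᵀ * b + aᵀ * d) (fun i j _ => hcomm _)
      have hF : cᵀ * b + aᵀ * d = l • 1 := by
        rw [← hl]
        ext i j
        simp [Matrix.scalar_apply, Matrix.diagonal_apply, Matrix.one_apply, mul_ite]
      have hG : dᵀ * a + bᵀ * c = l • 1 := by rw [← hFG, hF]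
      set Υ : Matrix (Fin m ⊕ Fin m) (Fin m ⊕ Fin m) ℝ :=
        Matrix.fromBlocks 0 1 1 0 with hΥ
      have hΥ2 : Υ * Υ = 1 := by
        rw [hΥ, Matrix.fromBlocks_multiply]
        simp [Matrix.fromBlocks_one]
      have hΥdet : Υ.det * Υ.det = 1 := by rw [← Matrix.det_mul, hΥ2, Matrix.det_one]
      have hΥne : Υ.det ≠ 0 := fun h0 => by simp [h0] at hΥdet
      have hblock : (Matrix.fromBlocks a b c d)ᵀ * Υ * Matrix.fromBlocks a b c d = l • Υ := by
        rw [hΥ, Matrix.fromBlocks_transpose, Matrix.fromBlocks_multiply,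
          Matrix.fromBlocks_multiply, Matrix.fromBlocks_smul]
        simp only [Matrix.mul_zero, Matrix.mul_one, zero_add, add_zero, smul_zero]
        rw [hE, hF, hG, hH]
      have hdetid : l ^ (m + m) = 1 := by
        have h6 := congrArg Matrix.det hblock
        rw [Matrix.det_mul, Matrix.det_mul, Matrix.det_transpose, hg, Matrix.det_smul] at h6
        simp only [one_mul, mul_one, Fintype.card_sum, Fintype.card_fin] at h6
        have h7 : l ^ (m + m) * Υ.det = 1 * Υ.det := by rw [← h6, one_mul]
        exact mul_right_cancel₀ hΥne h7
      have habs : |l| = 1 := by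
        have h7 : |l| ^ (m + m) = 1 := by rw [← abs_pow, hdetid, abs_one]
        by_contra hne
        rcases lt_or_gt_of_ne hne with hlt | hgt
        · have h8 := pow_lt_one₀ (abs_nonneg l) hlt (by omega : m + m ≠ 0)
          rw [h7] at h8; exact lt_irrefl _ h8
        · have h8 := one_lt_pow₀ hgt (by omega : m + m ≠ 0)
          rw [h7] at h8; exact lt_irrefl _ h8
      have hl1 : l = 1 ∨ l = -1 := (abs_eq zero_le_one).1 habs
      refine ⟨l, hl1.symm, ?_, ?_, ?_⟩
      · rw [add_comm]; exact hE
      · rw [add_comm]; exact hH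
      · rw [add_comm]; exact hF
  · rintro ⟨l, -, h1, h2, h3⟩ x hA hB
    have hE : cᵀ * a + aᵀ * c = 0 := by rw [add_comm]; exact h1
    have hH : dᵀ * b + bᵀ * d = 0 := by rw [add_comm]; exact h2
    have hF : cᵀ * b + aᵀ * d = l • 1 := by rw [add_comm]; exact h3
    have hG : dᵀ * a + bᵀ * c = l • 1 := by
      have h4 := congrArg Matrix.transpose h3
      rwa [Matrix.transpose_add, Matrix.transpose_mul, Matrix.transpose_mul,
        Matrix.transpose_transpose, Matrix.transpose_transpose, Matrix.transpose_smul,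
        Matrix.transpose_one] at h4
    apply rev_eq a b c d x hA hB
    rw [expand_id, hE, hH, hF, hG]
    simp only [Matrix.mul_zero, Matrix.zero_mul, neg_zero, zero_add, add_zero,
      Matrix.mul_smul, Matrix.smul_mul, Matrix.mul_one, Matrix.one_mul]
    abel
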